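/- Let (Γ,S) be a δ-hyperbolic group. There exists a constant C₁₄ ≥ 0, depending only on Γ, S and δ, such that for every g ∈ Γ of infinite order which is of minimal word length in its conjugacy class and every h ∈ Z(g) there exists k ∈ ℤ with ℓ_S(g^{−k}h) ≤ ℓ_S(g) + C₁₄. Equivalently, the extension 0 → g^ℤ → Z(g) → N(g) → 0 (with N(g) = Z(g)/g^ℤ) admits a set-theoretic section σ' : N(g) → Z(g) with ℓ_S(σ'(x)) ≤ ℓ_S(g) + C₁₄ for all x ∈ N(g). -/

import Mathlib

noncomputable section

def wordLen {Γ : Type} [Group Γ] (S : Set Γ) (g : Γ) : ℕ :=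
  sInf {n | ∃ l : List Γ, (∀ x ∈ l, x ∈ S) ∧ l.length = n ∧ l.prod = g}

def dS {Γ : Type} [Group Γ] (S : Set Γ) (g h : Γ) : ℕ := wordLen S (g⁻¹ * h)

def gpS {Γ : Type} [Group Γ] (S : Set Γ) (x y w : Γ) : ℝ :=
  ((dS S x w : ℝ) + (dS S y w : ℝ) - (dS S x y : ℝ)) / 2

def IsHypGroup {Γ : Type} [Group Γ] (S : Set Γ) (δ : ℝ) : Prop :=
  S.Finite ∧ (∀ s ∈ S, s⁻¹ ∈ S) ∧ Subgroup.closure S = ⊤ ∧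
  ∀ x y z w : Γ, min (gpS S x y w) (gpS S y z w) - δ ≤ gpS S x z w

namespace HypAux

variable {Γ : Type} [Group Γ] {S : Set Γ} {δ : ℝ}

lemma wl_le (g : Γ) (l : List Γ) (hl : ∀ x ∈ l, x ∈ S) (hp : l.prod = g) :
    wordLen S g ≤ l.length := Nat.sInf_le ⟨l, hl, rfl, hp⟩

lemma wl_nonempty (hS : IsHypGroup S δ) (g : Γ) :
    {n | ∃ l : List Γ, (∀ x ∈ l, x ∈ S) ∧ l.length = n ∧ l.prod = g}.Nonempty := by
  have hg : g ∈ (Subgroup.closure S).toSubmonoid := by rw [hS.2.2.1]; trivial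
  rw [Subgroup.closure_toSubmonoid] at hg
  have hU : S ∪ S⁻¹ ⊆ S := by
    rintro x (hx | hx)
    · exact hx
    · simpa using hS.2.1 _ hx
  obtain ⟨l, hl, hp⟩ := Submonoid.exists_list_of_mem_closure hg
  exact ⟨l.length, l, fun x hx => hU (hl x hx), rfl, hp⟩

lemma wl_spec (hS : IsHypGroup S δ) (g : Γ) :
    ∃ l : List Γ, (∀ x ∈ l, x ∈ S) ∧ l.length = wordLen S g ∧ l.prod = g :=
  Nat.sInf_mem (wl_nonempty hS g)

lemma wl_one : wordLen S (1 : Γ) = 0 :=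
  Nat.le_zero.mp (wl_le 1 [] (by simp) (by simp))

lemma wl_mul_le (hS : IsHypGroup S δ) (g h : Γ) :
    wordLen S (g * h) ≤ wordLen S g + wordLen S h := by
  obtain ⟨l1, h1, hl1, hp1⟩ := wl_spec hS g
  obtain ⟨l2, h2, hl2, hp2⟩ := wl_spec hS h
  have := wl_le (S := S) (g * h) (l1 ++ l2) (by
    intro x hx; rcases List.mem_append.mp hx with h | h
    · exact h1 x h
    · exact h2 x h) (by rw [List.prod_append, hp1, hp2])
  simpa [hl1, hl2] using this

lemma wl_inv_le (hS : IsHypGroup S δ) (g : Γ) : wordLen S g⁻¹ ≤ wordLen S g := by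
  obtain ⟨l, hl, hlen, hp⟩ := wl_spec hS g
  have := wl_le (S := S) g⁻¹ ((l.map Inv.inv).reverse) (by
    intro x hx
    simp only [List.mem_reverse, List.mem_map] at hx
    obtain ⟨y, hy, rfl⟩ := hx
    exact hS.2.1 y (hl y hy)) (by rw [← List.prod_inv_reverse] <;> simp [hp])
  simpa [hlen] using this

lemma wl_inv (hS : IsHypGroup S δ) (g : Γ) : wordLen S g⁻¹ = wordLen S g :=
  le_antisymm (wl_inv_le hS g) (by simpa using wl_inv_le hS g⁻¹)

lemma wl_eq_zero (hS : IsHypGroup S δ) {g : Γ} (h : wordLen S g = 0) : g = 1 := by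
  have := Nat.sInf_mem (wl_nonempty hS g)
  rw [show sInf {n | ∃ l : List Γ, (∀ x ∈ l, x ∈ S) ∧ l.length = n ∧ l.prod = g} = wordLen S g from rfl, h] at this
  obtain ⟨l, _, hlen, hp⟩ := this
  rw [List.length_eq_zero_iff] at hlen
  simpa [hlen] using hp.symm

lemma wl_pow_le (hS : IsHypGroup S δ) (g : Γ) (n : ℕ) :
    wordLen S (g ^ n) ≤ n * wordLen S g := by
  induction n with
  | zero => simp [wl_one]
  | succ n ih =>
      calc wordLen S (g ^ (n+1)) = wordLen S (g ^ n * g) := by rw [pow_succ]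
        _ ≤ wordLen S (g ^ n) + wordLen S g := wl_mul_le hS _ _
        _ ≤ n * wordLen S g + wordLen S g := by omega
        _ = (n+1) * wordLen S g := by ring

lemma wl_zpow_natAbs (hS : IsHypGroup S δ) (g : Γ) (k : ℤ) :
    wordLen S (g ^ k) = wordLen S (g ^ k.natAbs) := by
  rcases Int.natAbs_eq k with h | h
  · rw [h]; norm_cast
  · rw [h, zpow_neg, wl_inv hS]
    norm_cast
    simp [Int.natAbs_abs]


-- distance lemmas
lemma dS_def (g h : Γ) : dS S g h = wordLen S (g⁻¹ * h) := rfl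

lemma dS_self (g : Γ) : dS S g g = 0 := by simp [dS, wl_one]

lemma dS_comm (hS : IsHypGroup S δ) (g h : Γ) : dS S g h = dS S h g := by
  rw [dS, dS, ← wl_inv hS (g⁻¹ * h)]; simp [mul_inv_rev]

lemma dS_triangle (hS : IsHypGroup S δ) (g h k : Γ) :
    dS S g k ≤ dS S g h + dS S h k := by
  have := wl_mul_le hS (g⁻¹ * h) (h⁻¹ * k)
  simpa [dS, mul_assoc] using this

lemma dS_mul_left (u g h : Γ) : dS S (u * g) (u * h) = dS S g h := by
  simp [dS, mul_inv_rev, mul_assoc]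

lemma dS_one_left (g : Γ) : dS S 1 g = wordLen S g := by simp [dS]

lemma gpS_comm (hS : IsHypGroup S δ) (x y w : Γ) : gpS S x y w = gpS S y x w := by
  simp only [gpS, dS_comm hS x y]; ring

lemma gpS_nonneg (hS : IsHypGroup S δ) (x y w : Γ) : 0 ≤ gpS S x y w := by
  have h := dS_triangle hS x w y
  have h2 := dS_comm hS w y
  simp only [gpS]
  rw [h2] at h
  have : (dS S x y : ℝ) ≤ (dS S x w : ℝ) + (dS S y w : ℝ) := by exact_mod_cast h
  linarith

lemma gpS_mul_left (u x y w : Γ) : gpS S (u * x) (u * y) (u * w) = gpS S x y w := by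
  simp [gpS, dS_mul_left]

lemma gpS_self (hS : IsHypGroup S δ) (x w : Γ) : gpS S x x w = (dS S x w : ℝ) := by
  simp [gpS, dS_self]

lemma gpS_left_self (x w : Γ) : gpS S x w w = 0 := by simp [gpS, dS_self]

/-- `(p|q)_w + (p|w)_q = d q w`. -/
lemma gpS_add (hS : IsHypGroup S δ) (p q w : Γ) :
    gpS S p q w + gpS S p w q = (dS S q w : ℝ) := by
  simp only [gpS, dS_comm hS w q]; ring

lemma four_pt (hS : IsHypGroup S δ) (x y z w : Γ) :
    min (gpS S x y w) (gpS S y z w) - δ ≤ gpS S x z w := hS.2.2.2 x y z w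

-- balls are finite
lemma ball_finite (hS : IsHypGroup S δ) (n : ℕ) :
    {g : Γ | wordLen S g ≤ n}.Finite := by
  induction n with
  | zero =>
      apply Set.Finite.subset (Set.finite_singleton (1 : Γ))
      intro g hg
      simp only [Set.mem_setOf_eq, Nat.le_zero] at hg
      simp [wl_eq_zero hS hg]
  | succ n ih =>
      apply Set.Finite.subset ((hS.1.image2 (· * ·) ih).union ih)
      intro g hg
      simp only [Set.mem_setOf_eq] at hg
      rcases Nat.lt_or_ge (wordLen S g) (n+1) with h | h
      · exact Or.inr (by simpa using Nat.lt_succ_iff.mp h)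
      obtain ⟨l, hl, hlen, hp⟩ := wl_spec hS g
      have hlen' : l.length = n + 1 := by omega
      rcases l with _ | ⟨x, l'⟩
      · simp at hlen'
      have hb : l'.length = n := by simpa using hlen'
      have hmem : wordLen S l'.prod ≤ n := by
        have := wl_le (S := S) l'.prod l' (fun y hy => hl y (by simp [hy])) rfl
        omega
      exact Or.inl (Set.mem_image2.mpr ⟨x, hl x (by simp), l'.prod, hmem, by simpa using hp⟩)

-- prefix points on geodesics
lemma exists_prefix (hS : IsHypGroup S δ) (g : Γ) (t : ℕ) (ht : t ≤ wordLen S g) :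
    ∃ x : Γ, wordLen S x = t ∧ t + wordLen S (x⁻¹ * g) = wordLen S g := by
  obtain ⟨l, hl, hlen, hp⟩ := wl_spec hS g
  have h1 : wordLen S (l.take t).prod ≤ t := by
    have := wl_le (S := S) (l.take t).prod (l.take t)
      (fun y hy => hl y (List.mem_of_mem_take hy)) rfl
    have hlt : (l.take t).length = t := by rw [List.length_take]; omega
    omega
  have hsplit : (l.take t).prod * (l.drop t).prod = g := by
    rw [← List.prod_append, List.take_append_drop, hp]
  have hd : ((l.take t).prod)⁻¹ * g = (l.drop t).prod := by
    rw [← hsplit, inv_mul_cancel_left]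
  have h2 : wordLen S ((l.take t).prod⁻¹ * g) ≤ wordLen S g - t := by
    rw [hd]
    have h4 := wl_le (S := S) (l.drop t).prod (l.drop t)
      (fun y hy => hl y (List.mem_of_mem_drop hy)) rfl
    have : wordLen S (l.drop t).prod ≤ l.length - t := by
      rw [← List.length_drop]; exact h4
    omega
  have h3 : wordLen S g ≤ wordLen S (l.take t).prod + wordLen S ((l.take t).prod⁻¹ * g) := by
    have := wl_mul_le hS (l.take t).prod ((l.take t).prod⁻¹ * g)
    simpa [mul_assoc] using this
  exact ⟨(l.take t).prod, by omega, by omega⟩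


/-- Fellow traveling along two geodesics from a common vertex. -/
lemma fellow (hS : IsHypGroup S δ) (hδ : 0 ≤ δ) {a b c x x' : Γ} {s t : ℕ}
    (hx1 : dS S a x = s) (hx2 : (dS S a x : ℝ) + dS S x b = dS S a b)
    (hy1 : dS S a x' = t) (hy2 : (dS S a x' : ℝ) + dS S x' c = dS S a c) :
    (dS S x x' : ℝ) ≤ s + t - 2 * min (min (s:ℝ) (t:ℝ)) (gpS S b c a) + 4*δ := by
  set γ := gpS S b c a with hγ
  have hxb : gpS S x b a = (s : ℝ) := by
    simp only [gpS, dS_comm hS x a, dS_comm hS b a]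
    rw [hx1] at hx2 ⊢
    linarith
  have hcy : gpS S c x' a = (t : ℝ) := by
    simp only [gpS, dS_comm hS c a, dS_comm hS x' a, dS_comm hS c x']
    rw [hy1] at hy2 ⊢
    linarith
  have h4A := four_pt hS x b x' a
  have h4B := four_pt hS b c x' a
  rw [hcy] at h4B
  rw [hxb] at h4A
  have hid : (dS S x x' : ℝ) = s + t - 2 * gpS S x x' a := by
    have : gpS S x x' a = ((dS S x a : ℝ) + dS S x' a - dS S x x') / 2 := rfl
    rw [dS_comm hS x a, dS_comm hS x' a, hx1, hy1] at this
    linarith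
  have key : min (min (s:ℝ) (t:ℝ)) γ - 2*δ ≤ gpS S x x' a := by
    have h5 : min γ (t:ℝ) - δ ≤ gpS S b x' a := h4B
    have h6 : min (s:ℝ) (gpS S b x' a) - δ ≤ gpS S x x' a := h4A
    have h7 : min (s:ℝ) (min γ (t:ℝ) - δ) ≤ min (s:ℝ) (gpS S b x' a) :=
      min_le_min le_rfl h5
    have h8 : min (min (s:ℝ) (t:ℝ)) γ - δ ≤ min (s:ℝ) (min γ (t:ℝ) - δ) := by
      apply le_min
      · have := min_le_left (min (s:ℝ) (t:ℝ)) γ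
        have := min_le_left (s:ℝ) (t:ℝ)
        linarith
      · have h9 : min (min (s:ℝ) (t:ℝ)) γ ≤ γ := min_le_right _ _
        have h10 : min (min (s:ℝ) (t:ℝ)) γ ≤ (t:ℝ) :=
          le_trans (min_le_left _ _) (min_le_right _ _)
        have := le_min h9 h10
        linarith
    linarith
  linarith

/-- Chain lemma, part (i). -/
lemma chain_i (hS : IsHypGroup S δ) (hδ : 0 ≤ δ) {x : ℕ → Γ} {N : ℕ} {c : ℝ} (hc0 : 0 ≤ c)
    (hcor : ∀ m, m + 2 ≤ N → gpS S (x m) (x (m+2)) (x (m+1)) ≤ c)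
    (hstep : ∀ m, m + 1 ≤ N → 2*c + 3*δ + 1 ≤ (dS S (x m) (x (m+1)) : ℝ)) :
    ∀ m, m + 1 ≤ N → gpS S (x 0) (x (m+1)) (x m) ≤ c + δ := by
  intro m
  induction m with
  | zero =>
      intro _
      have h0 : gpS S (x 0) (x 1) (x 0) = 0 := by
        simp [gpS, dS_self, dS_comm hS (x 0) (x 1)]
      linarith [h0]
  | succ m ih =>
      intro h2
      have hu := ih (by omega)
      have hid := gpS_add hS (x 0) (x (m+1)) (x m)
      have h4 := four_pt hS (x m) (x 0) (x (m+2)) (x (m+1))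
      have hcor' := hcor m (by omega)
      have hstep' := hstep m (by omega)
      have hsym : gpS S (x m) (x 0) (x (m+1)) = gpS S (x 0) (x m) (x (m+1)) :=
        gpS_comm hS _ _ _
      have hdc : (dS S (x (m+1)) (x m) : ℝ) = dS S (x m) (x (m+1)) := by
        rw [dS_comm hS]
      by_contra hP
      push_neg at hP
      have hfirst : c + δ < gpS S (x m) (x 0) (x (m+1)) := by
        rw [hsym]
        linarith
      have hmin := lt_min hfirst hP
      linarith

/-- Chain lemma, part (ii). -/
lemma chain_ii (hS : IsHypGroup S δ) (hδ : 0 ≤ δ) {x : ℕ → Γ} {N : ℕ} {c : ℝ} (hc0 : 0 ≤ c)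
    (hcor : ∀ m, m + 2 ≤ N → gpS S (x m) (x (m+2)) (x (m+1)) ≤ c)
    (hstep : ∀ m, m + 1 ≤ N → 2*c + 3*δ + 1 ≤ (dS S (x m) (x (m+1)) : ℝ)) :
    ∀ m, m ≤ N → gpS S (x 0) (x N) (x m) ≤ c + 2*δ := by
  intro m hm
  rcases Nat.eq_zero_or_pos m with rfl | hm0
  · have h0 : gpS S (x 0) (x N) (x 0) = 0 := by
      simp [gpS, dS_self, dS_comm hS (x 0) (x N)]
    linarith [h0]
  rcases Nat.eq_or_lt_of_le hm with rfl | hmN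
  · have h0 : gpS S (x 0) (x m) (x m) = 0 := by
      simp [gpS, dS_self]
    linarith [h0]
  -- reversed chain
  have hcorR : ∀ k, k + 2 ≤ N → gpS S (x (N-k)) (x (N-(k+2))) (x (N-(k+1))) ≤ c := by
    intro k hk
    have h := hcor (N-k-2) (by omega)
    have e1 : N-k-2+2 = N-k := by omega
    have e2 : N-k-2+1 = N-(k+1) := by omega
    have e3 : N-(k+2) = N-k-2 := by omega
    rw [e1, e2] at h
    rw [e3, gpS_comm hS]
    exact h
  have hstepR : ∀ k, k + 1 ≤ N → 2*c + 3*δ + 1 ≤ (dS S (x (N-k)) (x (N-(k+1))) : ℝ) := by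
    intro k hk
    have h := hstep (N-k-1) (by omega)
    have e1 : N-k-1+1 = N-k := by omega
    have e2 : N-(k+1) = N-k-1 := by omega
    rw [e1] at h
    rw [e2, dS_comm hS]
    exact h
  have hrev := chain_i hS hδ hc0 hcorR hstepR (N - m - 1) (by omega)
  have e1 : N - 0 = N := rfl
  have e2 : N - (N - m - 1 + 1) = m := by omega
  have e3 : N - (N - m - 1) = m + 1 := by omega
  rw [e1, e2, e3] at hrev
  -- hrev : gpS S (x N) (x m) (x (m+1)) ≤ c + δ
  have hu := chain_i hS hδ hc0 hcor hstep m (by omega)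
  have hid := gpS_add hS (x N) (x (m+1)) (x m)
  -- hid : gp (xN)(x_{m+1})(x m) + gp (xN)(x m)(x_{m+1}) = dS (x (m+1)) (x m)
  have hstep' := hstep m (by omega)
  have hdc : (dS S (x (m+1)) (x m) : ℝ) = dS S (x m) (x (m+1)) := by rw [dS_comm hS]
  have h4 := four_pt hS (x 0) (x N) (x (m+1)) (x m)
  by_contra hQ
  push_neg at hQ
  have hsecond : c + 2*δ < gpS S (x N) (x (m+1)) (x m) := by linarith
  have hmin := lt_min hQ hsecond
  linarith

/-- Chain lemma, part (iii): linear growth. -/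
lemma chain_iii (hS : IsHypGroup S δ) (hδ : 0 ≤ δ) {x : ℕ → Γ} {N : ℕ} {c : ℝ} (hc0 : 0 ≤ c)
    (hcor : ∀ m, m + 2 ≤ N → gpS S (x m) (x (m+2)) (x (m+1)) ≤ c)
    (hstep : ∀ m, m + 1 ≤ N → 2*c + 3*δ + 1 ≤ (dS S (x m) (x (m+1)) : ℝ)) :
    ∀ m, m ≤ N → (m : ℝ) ≤ (dS S (x 0) (x m) : ℝ) := by
  intro m
  induction m with
  | zero => intro _; simp
  | succ m ih =>
      intro h2
      have hihm := ih (by omega)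
      have hgp := chain_i hS hδ hc0 hcor hstep m (by omega)
      have hstep' := hstep m (by omega)
      have hid : gpS S (x 0) (x (m+1)) (x m) =
          ((dS S (x 0) (x m) : ℝ) + dS S (x (m+1)) (x m) - dS S (x 0) (x (m+1))) / 2 := rfl
      have hdc : (dS S (x (m+1)) (x m) : ℝ) = dS S (x m) (x (m+1)) := by rw [dS_comm hS]
      push_cast
      push_cast at hihm
      linarith


/-- Straightness package for elements of minimal length in their conjugacy class. -/
lemma straight (hS : IsHypGroup S δ) (hδ : 0 ≤ δ) {g : Γ}
    (hmin : ∀ u : Γ, wordLen S g ≤ wordLen S (u * g * u⁻¹))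
    (hq : 6*δ + 4 ≤ (wordLen S g : ℝ)) :
    (∀ a b : ℕ, (wordLen S (g^a) : ℝ) + wordLen S (g^b) - wordLen S (g^(a+b)) ≤ 4*δ)
    ∧ (∀ n : ℕ, (n : ℝ) ≤ (wordLen S (g^n) : ℝ)) := by
  set q := wordLen S g with hqdef
  have hq4 : 4 ≤ q := by exact_mod_cast (by linarith : (4:ℝ) ≤ (q:ℝ))
  set t := (q+1)/2 with htdef
  have ht2 : q ≤ 2*t ∧ 2*t ≤ q + 1 ∧ t ≤ q := by omega
  obtain ⟨u, hu1, hu2⟩ := exists_prefix hS g t ht2.2.2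
  -- basic distances
  have hd1u : dS S 1 u = t := by rw [dS_one_left, hu1]
  have hdgu : dS S g u = q - t := by
    rw [dS, ← wl_inv hS]
    simp only [mul_inv_rev, inv_inv]
    have : wordLen S (u⁻¹ * g) = q - t := by omega
    exact this
  have hd1g : dS S 1 g = q := by rw [dS_one_left]
  have hdug : dS S u g = q - t := by rw [dS_comm hS, hdgu]
  have hdgug : dS S (g*u) g = t := by
    rw [dS]
    simp only [mul_inv_rev]
    rw [mul_assoc]
    simp [wl_inv hS, hu1]
  have hduu : (q : ℝ) ≤ dS S u (g*u) := by
    have h := hmin u⁻¹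
    rw [dS]
    have : u⁻¹ * (g * u) = u⁻¹ * g * u⁻¹⁻¹ := by group
    rw [this]
    exact_mod_cast h
  -- real step bounds
  have hstepu : 2*(0:ℝ) + 3*δ + 1 ≤ (t : ℝ) := by
    have h1 : (q:ℝ) ≤ 2*(t:ℝ) := by exact_mod_cast ht2.1
    linarith
  have hstepv : 2*(0:ℝ) + 3*δ + 1 ≤ ((q - t : ℕ) : ℝ) := by
    have h1 : 2*(t:ℝ) ≤ (q:ℝ) + 1 := by exact_mod_cast ht2.2.1
    have h2 : ((q - t : ℕ) : ℝ) = (q:ℝ) - (t:ℝ) := by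
      have : t ≤ q := ht2.2.2
      push_cast [this]
      ring
    rw [h2]
    linarith
  -- the chain, for arbitrary a
  have main : ∀ a N : ℕ,
      (∀ m, m + 2 ≤ N → gpS S (g ^ (((m/2 : ℕ):ℤ) - a) * u ^ (m % 2))
          (g ^ ((((m+2)/2 : ℕ):ℤ) - a) * u ^ ((m+2) % 2))
          (g ^ ((((m+1)/2 : ℕ):ℤ) - a) * u ^ ((m+1) % 2)) ≤ 0)
      ∧ (∀ m, m + 1 ≤ N → 2*(0:ℝ) + 3*δ + 1 ≤
          (dS S (g ^ (((m/2 : ℕ):ℤ) - a) * u ^ (m % 2))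
            (g ^ ((((m+1)/2 : ℕ):ℤ) - a) * u ^ ((m+1) % 2)) : ℝ)) := by
    intro a N
    constructor
    · intro m hm
      obtain ⟨i, rfl | rfl⟩ := Nat.even_or_odd' m
      · -- even : points g^{i-a}, g^{i-a}g, base g^{i-a}u
        have e1 : (2*i)/2 = i := by omega
        have e2 : (2*i) % 2 = 0 := by omega
        have e3 : (2*i+2)/2 = i+1 := by omega
        have e4 : (2*i+2) % 2 = 0 := by omega
        have e5 : (2*i+1)/2 = i := by omega
        have e6 : (2*i+1) % 2 = 1 := by omega
        rw [e1, e2, e3, e4, e5, e6]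
        have e7 : g ^ (((i+1:ℕ):ℤ) - a) = g ^ (((i:ℕ):ℤ) - a) * g := by
          rw [← zpow_add_one]
          congr 1
          push_cast
          ring
        simp only [pow_zero, pow_one, mul_one, e7]
        have := gpS_mul_left (S := S) (g ^ (((i:ℕ):ℤ) - a)) 1 g u
        rw [mul_one] at this
        rw [this]
        have : gpS S 1 g u = ((dS S 1 u : ℝ) + dS S g u - dS S 1 g)/2 := rfl
        rw [this, hd1u, hdgu, hd1g]
        have h2 : ((q - t : ℕ) : ℝ) = (q:ℝ) - (t:ℝ) := by
          have : t ≤ q := ht2.2.2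
          push_cast [this]; ring
        rw [h2]
        linarith
      · -- odd : points g^{i-a}u, g^{i-a}(g u), base g^{i-a}g
        have e1 : (2*i+1)/2 = i := by omega
        have e2 : (2*i+1) % 2 = 1 := by omega
        have e3 : (2*i+3)/2 = i+1 := by omega
        have e4 : (2*i+3) % 2 = 1 := by omega
        have e5 : (2*i+2)/2 = i+1 := by omega
        have e6 : (2*i+2) % 2 = 0 := by omega
        have e2' : (2*i+1+2) = 2*i+3 := by omega
        have e2'' : (2*i+1+1) = 2*i+2 := by omega
        rw [e2', e2'', e1, e2, e3, e4, e5, e6]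
        have e7 : g ^ (((i+1:ℕ):ℤ) - a) = g ^ (((i:ℕ):ℤ) - a) * g := by
          rw [← zpow_add_one]; congr 1; push_cast; ring
        simp only [pow_zero, pow_one, mul_one, e7, mul_assoc]
        have := gpS_mul_left (S := S) (g ^ (((i:ℕ):ℤ) - a)) u (g * u) g
        rw [this]
        have hgp : gpS S u (g*u) g = ((dS S u g : ℝ) + dS S (g*u) g - dS S u (g*u))/2 := rfl
        rw [hgp, hdug, hdgug]
        have h2 : ((q - t : ℕ) : ℝ) = (q:ℝ) - (t:ℝ) := by
          have : t ≤ q := ht2.2.2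
          push_cast [this]; ring
        rw [h2]
        linarith
    · intro m hm
      obtain ⟨i, rfl | rfl⟩ := Nat.even_or_odd' m
      · have e1 : (2*i)/2 = i := by omega
        have e2 : (2*i) % 2 = 0 := by omega
        have e5 : (2*i+1)/2 = i := by omega
        have e6 : (2*i+1) % 2 = 1 := by omega
        rw [e1, e2, e5, e6]
        simp only [pow_zero, pow_one]
        rw [dS_mul_left, dS_one_left, hu1]
        exact hstepu
      · have e2'' : (2*i+1+1) = 2*i+2 := by omega
        have e1 : (2*i+1)/2 = i := by omega
        have e2 : (2*i+1) % 2 = 1 := by omega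
        have e5 : (2*i+2)/2 = i+1 := by omega
        have e6 : (2*i+2) % 2 = 0 := by omega
        rw [e2'', e1, e2, e5, e6]
        have e7 : g ^ (((i+1:ℕ):ℤ) - a) = g ^ (((i:ℕ):ℤ) - a) * g := by
          rw [← zpow_add_one]; congr 1; push_cast; ring
        simp only [pow_zero, pow_one, mul_one, e7]
        rw [dS_mul_left, hdug]
        exact hstepv
  -- derive the two statements
  constructor
  · intro a b
    have h := chain_ii hS hδ le_rfl (main a (2*(a+b))).1 (main a (2*(a+b))).2 (2*a) (by omega)
    have e1 : ((2*a)/2 : ℕ) = a := by omega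
    have e2 : ((2*a) % 2 : ℕ) = 0 := by omega
    have e3 : ((0:ℕ)/2 : ℕ) = 0 := by omega
    have e4 : ((0:ℕ) % 2 : ℕ) = 0 := by omega
    have e5 : ((2*(a+b))/2 : ℕ) = a+b := by omega
    have e6 : ((2*(a+b)) % 2 : ℕ) = 0 := by omega
    rw [e1, e2, e3, e4, e5, e6] at h
    simp only [pow_zero, mul_one, Nat.cast_zero, zero_sub] at h
    have e7 : (((a+b:ℕ):ℤ) - a) = (b:ℤ) := by push_cast; ring
    rw [e7] at h
    simp only [sub_self, zpow_zero] at h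
    have hgp : gpS S (g ^ (-(a:ℤ))) (g ^ ((b:ℕ):ℤ)) 1 =
        ((wordLen S (g^a) : ℝ) + wordLen S (g^b) - wordLen S (g^(a+b)))/2 := by
      have d1 : dS S (g ^ (-(a:ℤ))) 1 = wordLen S (g^a) := by
        rw [dS]
        simp only [mul_one, zpow_neg, inv_inv]
        rw [wl_zpow_natAbs hS]
        norm_num
      have d2 : dS S (g ^ ((b:ℕ):ℤ)) 1 = wordLen S (g^b) := by
        rw [dS]
        simp only [mul_one]
        rw [← zpow_neg, wl_zpow_natAbs hS]
        have eb : (-((b:ℕ):ℤ)).natAbs = b := by omega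
        rw [eb]
      have d3 : dS S (g ^ (-(a:ℤ))) (g ^ ((b:ℕ):ℤ)) = wordLen S (g^(a+b)) := by
        rw [dS]
        simp only [zpow_neg, inv_inv]
        rw [← zpow_add, wl_zpow_natAbs hS]
        have eb : (((a:ℕ):ℤ) + ((b:ℕ):ℤ)).natAbs = a + b := by omega
        rw [eb]
      rw [gpS, d1, d2, d3]
    rw [hgp] at h
    linarith
  · intro n
    have h := chain_iii hS hδ le_rfl (main 0 (2*n)).1 (main 0 (2*n)).2 (2*n) le_rfl
    have e3 : ((0:ℕ)/2 : ℕ) = 0 := by omega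
    have e4 : ((0:ℕ) % 2 : ℕ) = 0 := by omega
    have e5 : ((2*n)/2 : ℕ) = n := by omega
    have e6 : ((2*n) % 2 : ℕ) = 0 := by omega
    rw [e3, e4, e5, e6] at h
    simp only [pow_zero, mul_one, Nat.cast_zero, zero_sub, neg_zero, zpow_zero,
      Nat.cast_ofNat] at h
    simp only [Nat.cast_zero, sub_zero] at h
    have d1 : dS S (1:Γ) (g ^ ((n:ℕ):ℤ)) = wordLen S (g^n) := by
      rw [dS_one_left, wl_zpow_natAbs hS]
      norm_num
    rw [d1] at h
    push_cast at h ⊢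
    linarith


set_option maxHeartbeats 1000000 in
/-- Core geometric lemma: every element commuting with a straight element `p` lies
within `ℓ(p) + 20δ + 2` of some power of `p`. -/
lemma main_core (hS : IsHypGroup S δ) (hδ : 0 ≤ δ) {p : Γ}
    (hst : ∀ a b : ℕ, (wordLen S (p^a) : ℝ) + wordLen S (p^b) - wordLen S (p^(a+b)) ≤ 4*δ)
    (hgr : ∀ m : ℕ, (m : ℝ) ≤ (wordLen S (p^m) : ℝ))
    {h : Γ} (hcomm : h * p = p * h) :
    ∃ j : ℤ, (wordLen S (p ^ (-j) * h) : ℝ) ≤ (wordLen S p : ℝ) + 20*δ + 2 := by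
  classical
  set q := wordLen S p with hqdef
  set D := wordLen S h with hDdef
  obtain ⟨k₂, hk2a, hk2b⟩ : ∃ k₂ : ℕ, 2*δ ≤ (k₂ : ℝ) ∧ (k₂ : ℝ) ≤ 2*δ + 2 := by
    refine ⟨⌈2*δ⌉₊ + 1, ?_, ?_⟩
    · have := Nat.le_ceil (2*δ)
      push_cast
      linarith
    · have := Nat.ceil_lt_add_one (by linarith : (0:ℝ) ≤ 2*δ)
      push_cast
      linarith
  have hc : Commute h p := hcomm
  have hmove : ∀ m : ℕ, h⁻¹ * (p^m * h) = p^m := by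
    intro m
    rw [← (hc.pow_right m).eq, inv_mul_cancel_left]
  obtain ⟨n, hnreal⟩ : ∃ n : ℕ, (2*D : ℝ) + k₂ + 8*δ + 10 ≤ (wordLen S (p^n) : ℝ) := by
    refine ⟨2*D + k₂ + ⌈8*δ⌉₊ + 10, ?_⟩
    have h8 : 8*δ ≤ (⌈8*δ⌉₊ : ℝ) := Nat.le_ceil _
    have hgrn := hgr (2*D + k₂ + ⌈8*δ⌉₊ + 10)
    have : ((2*D + k₂ + ⌈8*δ⌉₊ + 10 : ℕ) : ℝ) = 2*(D:ℝ) + k₂ + (⌈8*δ⌉₊:ℝ) + 10 := by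
      push_cast; ring
    rw [this] at hgrn
    linarith
  -- abbreviations for powers
  have hL2n : wordLen S (p^(2*n)) ≤ 2 * wordLen S (p^n) := by
    have := wl_mul_le hS (p^n) (p^n)
    rw [← pow_add] at this
    have e : n + n = 2*n := by omega
    rw [e] at this
    omega
  have hstnn := hst n n
  have e2n : n + n = 2*n := by omega
  rw [e2n] at hstnn
  set Ln := wordLen S (p^n) with hLndef
  set L2n := wordLen S (p^(2*n)) with hL2ndef
  -- four corner points
  set Bp : Γ := p^n with hBpdef
  set Ap : Γ := (p^n)⁻¹ with hApdef
  set A' : Γ := (p^n)⁻¹ * h with hA'def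
  set B' : Γ := p^n * h with hB'def
  -- distances
  have dA'h : dS S A' h = Ln := by
    rw [dS]
    have : A'⁻¹ * h = p^n := by
      rw [hA'def, mul_inv_rev, inv_inv, mul_assoc, hmove n]
    rw [this]
  have dhB' : dS S h B' = Ln := by
    rw [dS]
    have : h⁻¹ * B' = p^n := by rw [hB'def]; exact hmove n
    rw [this]
  have hA'B'eq : A'⁻¹ * B' = p^(2*n) := by
    have h1 : A'⁻¹ * B' = h⁻¹ * (p^(2*n) * h) := by
      rw [hA'def, hB'def]
      simp only [mul_inv_rev, inv_inv]
      rw [mul_assoc, ← mul_assoc (p^n) (p^n) h, ← pow_add, e2n]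
    rw [h1, hmove (2*n)]
  have hA'Beq : A'⁻¹ * Bp = h⁻¹ * p^(2*n) := by
    rw [hA'def, hBpdef]
    simp only [mul_inv_rev, inv_inv]
    rw [mul_assoc, ← pow_add, e2n]
  have hBpAeq : Bp⁻¹ * Ap = (p^(2*n))⁻¹ := by
    rw [hBpdef, hApdef, ← mul_inv_rev, ← pow_add, e2n]
  have dA'B' : dS S A' B' = L2n := by
    rw [dS, hA'B'eq]
  have dBB' : dS S Bp B' = D := by
    rw [dS, hBpdef, hB'def, inv_mul_cancel_left]
  have dBA : dS S Bp Ap = L2n := by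
    rw [dS, hBpAeq, wl_inv hS]
  have dA'A : dS S A' Ap = D := by
    rw [dS, hA'def, hApdef]
    have : (((p^n)⁻¹ * h)⁻¹ * (p^n)⁻¹)⁻¹ = h := by
      simp [mul_inv_rev, inv_inv, inv_mul_cancel_left]
    rw [← wl_inv hS, this]
  set D₂ := dS S A' Bp with hD2def
  have dA'B_up : (D₂ : ℝ) ≤ L2n + D := by
    have h1 : dS S A' Bp ≤ dS S A' B' + dS S B' Bp := dS_triangle hS _ _ _
    rw [dA'B'] at h1
    have h2 : dS S B' Bp = D := by rw [dS_comm hS]; exact dBB'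
    rw [h2] at h1
    exact_mod_cast h1
  have dA'B_low : (L2n : ℝ) - D ≤ D₂ := by
    have h1 : dS S A' B' ≤ dS S A' Bp + dS S Bp B' := dS_triangle hS _ _ _
    rw [dA'B', dBB'] at h1
    have : (L2n:ℝ) ≤ D₂ + D := by exact_mod_cast h1
    linarith
  -- the parameter t
  have hk2Ln : k₂ ≤ Ln := by
    have : (k₂:ℝ) ≤ (Ln:ℝ) := by linarith
    exact_mod_cast this
  set t : ℕ := Ln - k₂ with htdef
  have htreal : (t : ℝ) = (Ln:ℝ) - k₂ := by
    push_cast [htdef, hk2Ln]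
    ring
  have htD : 2*(D:ℝ) + 8*δ + 8 ≤ (t:ℝ) := by rw [htreal]; linarith
  have hL2nr : 2*(Ln:ℝ) - 4*δ ≤ L2n ∧ (L2n:ℝ) ≤ 2*Ln := by
    constructor
    · linarith
    · exact_mod_cast hL2n
  -- Step 0 : the point X near h on the geodesic [A', B']
  have htL2n : t ≤ L2n := by
    have : (t:ℝ) ≤ L2n := by
      rw [htreal]
      have : (Ln:ℝ) ≤ 2*Ln - 4*δ := by linarith
      linarith [hL2nr.1]
    exact_mod_cast this
  obtain ⟨w1, hw11, hw12⟩ := exists_prefix hS (p^(2*n)) t (by rw [← hL2ndef]; exact htL2n)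
  set X : Γ := A' * w1 with hXdef
  have dA'X : dS S A' X = t := by
    rw [dS, hXdef, inv_mul_cancel_left, hw11]
  have dXB' : t + dS S X B' = L2n := by
    rw [dS]
    have : X⁻¹ * B' = w1⁻¹ * p^(2*n) := by
      rw [hXdef, mul_inv_rev, mul_assoc, hA'B'eq]
    rw [this, hw12, ← hL2ndef]
  have gpXB' : gpS S X B' A' = (t:ℝ) := by
    have : gpS S X B' A' = ((dS S X A' : ℝ) + dS S B' A' - dS S X B')/2 := rfl
    rw [this, dS_comm hS X A', dA'X, dS_comm hS B' A', dA'B']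
    have : (dS S X B' : ℝ) = (L2n:ℝ) - t := by
      have := dXB'
      push_cast [← this]
      ring
    rw [this]
    ring
  have gpB'h : gpS S B' h A' = (L2n:ℝ)/2 := by
    have : gpS S B' h A' = ((dS S B' A' : ℝ) + dS S h A' - dS S B' h)/2 := rfl
    rw [this, dS_comm hS B' A', dA'B', dS_comm hS h A', dA'h, dS_comm hS B' h, dhB']
    ring
  have hXh : (dS S h X : ℝ) ≤ (k₂:ℝ) + 2*δ := by
    have h4 := four_pt hS X B' h A'
    rw [gpXB', gpB'h] at h4
    have hmin : min (t:ℝ) ((L2n:ℝ)/2) = (t:ℝ) := by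
      apply min_eq_left
      rw [htreal]
      linarith [hL2nr.1, hk2a]
    rw [hmin] at h4
    have hgpdef : gpS S X h A' = ((dS S X A' : ℝ) + dS S h A' - dS S X h)/2 := rfl
    rw [hgpdef, dS_comm hS X A', dA'X, dS_comm hS h A', dA'h] at h4
    have : (dS S X h : ℝ) = dS S h X := by rw [dS_comm hS]
    rw [this] at h4
    rw [htreal] at h4
    linarith
  -- Step 1 : Y on [A', Bp]
  have htD2 : t ≤ D₂ := by
    have : (t:ℝ) ≤ D₂ := by
      rw [htreal]
      have : (Ln:ℝ) - k₂ ≤ L2n - D := by linarith [hL2nr.1]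
      linarith [dA'B_low]
    exact_mod_cast this
  have hD2wl : D₂ = wordLen S (h⁻¹ * p^(2*n)) := by
    rw [hD2def, dS, hA'Beq]
  obtain ⟨w2, hw21, hw22⟩ := exists_prefix hS (h⁻¹ * p^(2*n)) t (by rw [← hD2wl]; exact htD2)
  set Y : Γ := A' * w2 with hYdef
  have dA'Y : dS S A' Y = t := by rw [dS, hYdef, inv_mul_cancel_left, hw21]
  have dYB : t + dS S Y Bp = D₂ := by
    rw [dS]
    have : Y⁻¹ * Bp = w2⁻¹ * (h⁻¹ * p^(2*n)) := by
      rw [hYdef, mul_inv_rev, mul_assoc, hA'Beq]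
    rw [this, hw22, ← hD2wl]
  have hXY : (dS S X Y : ℝ) ≤ 4*δ := by
    have hfel := fellow hS hδ (a := A') (b := B') (c := Bp) (x := X) (x' := Y) (s := t) (t := t)
      dA'X (by
        rw [dA'X, dA'B']
        have := dXB'
        push_cast [← this]
        ring) dA'Y (by
        rw [dA'Y]
        have := dYB
        rw [← hD2def]
        push_cast [← this]
        ring)
    have hγ : (L2n:ℝ) - D ≤ gpS S B' Bp A' := by
      have : gpS S B' Bp A' = ((dS S B' A' : ℝ) + dS S Bp A' - dS S B' Bp)/2 := rfl
      rw [this, dS_comm hS B' A', dA'B', dS_comm hS Bp A', ← hD2def, dS_comm hS B' Bp, dBB']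
      linarith [dA'B_low]
    have hmin : min (min (t:ℝ) (t:ℝ)) (gpS S B' Bp A') = (t:ℝ) := by
      rw [min_self]
      apply min_eq_left
      have : (t:ℝ) ≤ L2n - D := by rw [htreal]; linarith [hL2nr.1]
      linarith
    rw [hmin] at hfel
    linarith
  -- Step 2 : Z on [Bp, Ap]
  set s₂ : ℕ := D₂ - t with hs2def
  have hs2real : (s₂ : ℝ) = (D₂:ℝ) - t := by push_cast [hs2def, htD2]; ring
  have hs2L2n : s₂ ≤ L2n := by
    have : (s₂:ℝ) ≤ L2n := by
      rw [hs2real, htreal]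
      linarith [dA'B_up]
    exact_mod_cast this
  have hApwl : dS S Bp Ap = wordLen S ((p^(2*n))⁻¹) := by
    rw [dBA, wl_inv hS]
  obtain ⟨w3, hw31, hw32⟩ := exists_prefix hS ((p^(2*n))⁻¹) s₂ (by
    rw [wl_inv hS]
    exact hs2L2n)
  set Z : Γ := Bp * w3 with hZdef
  have dBZ : dS S Bp Z = s₂ := by rw [dS, hZdef, inv_mul_cancel_left, hw31]
  have dZA : s₂ + dS S Z Ap = L2n := by
    rw [dS]
    have : Z⁻¹ * Ap = w3⁻¹ * (p^(2*n))⁻¹ := by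
      rw [hZdef, mul_inv_rev, mul_assoc, hBpAeq]
    rw [this, hw32, wl_inv hS]
  have dBY : dS S Bp Y = s₂ := by
    rw [dS_comm hS]
    omega
  have hYZ : (dS S Y Z : ℝ) ≤ 4*δ := by
    have hfel := fellow hS hδ (a := Bp) (b := A') (c := Ap) (x := Y) (x' := Z) (s := s₂) (t := s₂)
      dBY (by
        rw [dBY, dS_comm hS Y A', dA'Y, dS_comm hS Bp A', ← hD2def]
        have hsum : s₂ + t = D₂ := by omega
        push_cast [← hsum]
        ring) dBZ (by
        rw [dBZ, dBA]
        push_cast [← dZA]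
        ring)
    have hγ : (L2n:ℝ) - D ≤ gpS S A' Ap Bp := by
      have : gpS S A' Ap Bp = ((dS S A' Bp : ℝ) + dS S Ap Bp - dS S A' Ap)/2 := rfl
      rw [this, ← hD2def, dS_comm hS Ap Bp, dBA, dA'A]
      linarith [dA'B_low]
    have hmin : min (min (s₂:ℝ) (s₂:ℝ)) (gpS S A' Ap Bp) = (s₂:ℝ) := by
      rw [min_self]
      apply min_eq_left
      have : (s₂:ℝ) ≤ L2n - D := by
        rw [hs2real]
        have : (D₂:ℝ) ≤ L2n + D := dA'B_up
        linarith [htD]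
      linarith
    rw [hmin] at hfel
    linarith
  -- Step 3 : from Z to a power of p
  obtain ⟨i, hi2n, his, hgap⟩ :
      ∃ i : ℕ, i ≤ 2*n ∧ s₂ ≤ wordLen S (p^i) ∧ wordLen S (p^i) ≤ s₂ + q := by
    have hex : ∃ i : ℕ, s₂ ≤ wordLen S (p^i) := by
      refine ⟨2*n, ?_⟩
      rw [← hL2ndef]
      exact hs2L2n
    refine ⟨Nat.find hex, Nat.find_le (by rw [← hL2ndef]; exact hs2L2n), Nat.find_spec hex, ?_⟩
    rcases Nat.eq_zero_or_pos (Nat.find hex) with hi0 | hipos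
    · rw [hi0, pow_zero, wl_one]
      omega
    · have hprev : ¬ (s₂ ≤ wordLen S (p^(Nat.find hex - 1))) := Nat.find_min hex (by omega)
      push_neg at hprev
      have hstep : wordLen S (p^(Nat.find hex)) ≤ wordLen S (p^(Nat.find hex - 1)) + q := by
        have e : p^(Nat.find hex) = p^(Nat.find hex - 1) * p := by
          rw [← pow_succ]; congr 1; omega
        rw [e]
        exact wl_mul_le hS _ _
      omega
  set Li := wordLen S (p^i) with hLidef
  have hgapr : (Li:ℝ) - s₂ ≤ q := by
    have : (Li:ℝ) ≤ (s₂:ℝ) + q := by exact_mod_cast hgap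
    linarith
  set Wstar : Γ := p^n * (p^i)⁻¹ with hWdef
  have dBW : dS S Bp Wstar = Li := by
    rw [dS, hBpdef, hWdef, inv_mul_cancel_left, wl_inv hS]
  have dAW : dS S Ap Wstar = wordLen S (p^(2*n - i)) := by
    rw [dS, hApdef, hWdef, ← wl_inv hS]
    have e1 : ((p^n)⁻¹⁻¹ * (p^n * (p^i)⁻¹))⁻¹ = p^i * ((p^n)⁻¹ * (p^n)⁻¹) := by
      simp [mul_inv_rev, inv_inv, mul_assoc]
    rw [e1]
    have einv : (p^n)⁻¹ * (p^n)⁻¹ = (p^(2*n))⁻¹ := by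
      rw [← mul_inv_rev, ← pow_add, e2n]
    have e2 : p^i * ((p^n)⁻¹ * (p^n)⁻¹) = (p^(2*n-i))⁻¹ := by
      rw [einv]
      have e3 : p^(2*n) = p^(2*n-i) * p^i := by rw [← pow_add]; congr 1; omega
      rw [e3, mul_inv_rev]
      simp [← mul_assoc]
    rw [e2, wl_inv hS]
  have hZW : (dS S Z Wstar : ℝ) ≤ (q:ℝ) + 8*δ := by
    have hfel := fellow hS hδ (a := Bp) (b := Ap) (c := Wstar) (x := Z) (x' := Wstar) (s := s₂) (t := Li)
      dBZ (by
        rw [dBZ, dBA]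
        push_cast [← dZA]
        ring) dBW (by
        rw [dBW, dS_self]
        simp)
    have hγ : (Li:ℝ) - 2*δ ≤ gpS S Ap Wstar Bp := by
      have : gpS S Ap Wstar Bp = ((dS S Ap Bp : ℝ) + dS S Wstar Bp - dS S Ap Wstar)/2 := rfl
      rw [this, dS_comm hS Ap Bp, dBA, dS_comm hS Wstar Bp, dBW, dAW]
      have hsti := hst i (2*n - i)
      rw [show i + (2*n - i) = 2*n from by omega] at hsti
      rw [← hLidef, ← hL2ndef] at hsti
      linarith
    have hmins : min (s₂:ℝ) (Li:ℝ) = (s₂:ℝ) := min_eq_left (by exact_mod_cast his)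
    have hmin2 : (s₂:ℝ) - 2*δ ≤ min (min (s₂:ℝ) (Li:ℝ)) (gpS S Ap Wstar Bp) := by
      rw [hmins]
      apply le_min
      · linarith
      · have : (s₂:ℝ) ≤ Li := by exact_mod_cast his
        linarith
    have : (dS S Z Wstar : ℝ) ≤ s₂ + Li - 2*((s₂:ℝ) - 2*δ) + 4*δ := by
      have hmono := hfel
      have h2 : (s₂:ℝ) + Li - 2 * min (min (s₂:ℝ) (Li:ℝ)) (gpS S Ap Wstar Bp) + 4*δ ≤
          s₂ + Li - 2*((s₂:ℝ) - 2*δ) + 4*δ := by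
        linarith [hmin2]
      linarith
    linarith [hgapr]
  -- total
  have htot : (dS S h Wstar : ℝ) ≤ (q:ℝ) + 20*δ + 2 := by
    have t1 : dS S h Wstar ≤ dS S h X + dS S X Wstar := dS_triangle hS _ _ _
    have t2 : dS S X Wstar ≤ dS S X Y + dS S Y Wstar := dS_triangle hS _ _ _
    have t3 : dS S Y Wstar ≤ dS S Y Z + dS S Z Wstar := dS_triangle hS _ _ _
    have c1 : (dS S h Wstar : ℝ) ≤ (dS S h X : ℝ) + dS S X Y + dS S Y Z + dS S Z Wstar := by
      push_cast
      have t1' : (dS S h Wstar : ℝ) ≤ (dS S h X : ℝ) + (dS S X Wstar : ℝ) := by exact_mod_cast t1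
      have t2' : (dS S X Wstar : ℝ) ≤ (dS S X Y : ℝ) + (dS S Y Wstar : ℝ) := by exact_mod_cast t2
      have t3' : (dS S Y Wstar : ℝ) ≤ (dS S Y Z : ℝ) + (dS S Z Wstar : ℝ) := by exact_mod_cast t3
      linarith
    linarith [hXh, hXY, hYZ, hZW, hk2b]
  refine ⟨(n:ℤ) - i, ?_⟩
  have hfinal : wordLen S (p ^ (-((n:ℤ) - i)) * h) = dS S h Wstar := by
    rw [dS, ← wl_inv hS (h⁻¹ * Wstar)]
    congr 1
    have e2 : (-((n:ℤ) - i) : ℤ) = (i:ℤ) + (-(n:ℤ)) := by ring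
    rw [e2, zpow_add, zpow_neg, zpow_natCast, zpow_natCast, hWdef]
    simp only [mul_inv_rev, inv_inv]
  rw [hfinal]
  exact htot


set_option maxHeartbeats 1600000 in
/-- A "flat" element (powers grow at most like an ultrametric) has finite order. -/
lemma flat_impossible (hS : IsHypGroup S δ) (hδ : 0 ≤ δ) {r : Γ} (hr : ¬ IsOfFinOrder r)
    (hum : ∀ a b : ℕ, 1 ≤ a → 1 ≤ b →
      (wordLen S (r^(a+b)) : ℝ) ≤
        max (wordLen S (r^a) : ℝ) (wordLen S (r^b) : ℝ) + (3*δ+1)) :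
    False := by
  classical
  have hinj : Function.Injective (fun m : ℕ => r ^ m) :=
    injective_pow_iff_not_isOfFinOrder.mpr hr
  set L1 := wordLen S r with hL1def
  have hL1pos : 1 ≤ L1 := by
    by_contra hcon
    push_neg at hcon
    have : r = 1 := wl_eq_zero hS (by omega)
    exact hr (this ▸ IsOfFinOrder.one)
  -- powers escape every ball
  have hub : ∀ R : ℕ, ∃ m : ℕ, 1 ≤ m ∧ R < wordLen S (r^m) := by
    intro R
    have hfin : {m : ℕ | wordLen S (r^m) ≤ R}.Finite := by
      have : {m : ℕ | wordLen S (r^m) ≤ R} = (fun m : ℕ => r^m) ⁻¹' {x | wordLen S x ≤ R} := rfl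
      rw [this]
      exact Set.Finite.preimage (hinj.injOn) (ball_finite hS R)
    obtain ⟨M, hM⟩ := hfin.bddAbove
    refine ⟨M + 1, by omega, ?_⟩
    by_contra hcon
    push_neg at hcon
    have := hM (show M+1 ∈ {m : ℕ | wordLen S (r^m) ≤ R} from hcon)
    omega
  -- the ball for the pigeonhole
  set RB : ℕ := ⌈27*δ⌉₊ + 10 with hRBdef
  have hRBreal : 27*δ + 10 ≤ (RB:ℝ) := by
    have := Nat.le_ceil (27*δ)
    push_cast [hRBdef]
    linarith
  set BF := (ball_finite hS RB).toFinset with hBFdef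
  set Nb := BF.card with hNbdef
  -- choose a scale
  obtain ⟨N, hN1, hNbig⟩ := hub (L1 * (2*Nb + 5) + (⌈8*δ⌉₊ + 12))
  -- the maximum over [1, N]
  obtain ⟨n, hnmem, hnmax⟩ := Finset.exists_max_image (Finset.Icc 1 N)
    (fun j => wordLen S (r^j)) ⟨N, by simp [Finset.mem_Icc]; omega⟩
  simp only [Finset.mem_Icc] at hnmem
  set W := wordLen S (r^n) with hWdef
  have hWbig : L1 * (2*Nb + 5) + (⌈8*δ⌉₊ + 12) < W := by
    have := hnmax N (by simp [Finset.mem_Icc]; omega)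
    omega
  have hW8 : (8*δ:ℝ) + 12 ≤ (W:ℝ) := by
    have h8 : 8*δ ≤ (⌈8*δ⌉₊ : ℝ) := Nat.le_ceil _
    have : (⌈8*δ⌉₊ + 12 : ℕ) ≤ W := by omega
    have h2 : ((⌈8*δ⌉₊ + 12 : ℕ):ℝ) ≤ (W:ℝ) := by exact_mod_cast this
    push_cast at h2
    linarith
  have hnbig : 2*Nb + 5 ≤ n := by
    have hWn : W ≤ n * L1 := wl_pow_le hS r n
    nlinarith [hL1pos, hWbig]
  -- the set J
  set J := (Finset.Icc 1 (n-1)).filter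
    (fun j => (W:ℝ) ≤ (wordLen S (r^j) : ℝ) + (3*δ+1)) with hJdef
  have hcover : Finset.Icc 1 (n-1) ⊆ J ∪ J.image (fun j => n - j) := by
    intro j hj
    simp only [Finset.mem_Icc] at hj
    have hult := hum j (n-j) (by omega) (by omega)
    rw [show j + (n-j) = n from by omega] at hult
    rcases le_total ((wordLen S (r^(n-j)) : ℝ)) ((wordLen S (r^j)) : ℝ) with hc | hc
    · apply Finset.mem_union_left
      rw [hJdef, Finset.mem_filter]
      exact ⟨by simp [Finset.mem_Icc]; omega, by rw [max_eq_left hc] at hult; exact hult⟩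
    · apply Finset.mem_union_right
      rw [Finset.mem_image]
      refine ⟨n - j, ?_, by omega⟩
      rw [hJdef, Finset.mem_filter]
      exact ⟨by simp [Finset.mem_Icc]; omega, by rw [max_eq_right hc] at hult; exact hult⟩
  have hJcard : Nb + 1 ≤ J.card := by
    have h1 : (Finset.Icc 1 (n-1)).card ≤ (J ∪ J.image (fun j => n - j)).card :=
      Finset.card_le_card hcover
    have h2 : (J ∪ J.image (fun j => n - j)).card ≤ J.card + J.card :=
      le_trans (Finset.card_union_le _ _) (by
        have := Finset.card_image_le (s := J) (f := fun j => n - j)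
        omega)
    have h3 : (Finset.Icc 1 (n-1)).card = n - 1 := by rw [Nat.card_Icc]; omega
    omega
  -- the midpoint
  set H := W/2 with hHdef
  obtain ⟨mid, hmid1, hmid2⟩ := exists_prefix hS (r^n) H (by omega)
  set s₀ := W - H with hs0def
  have hds : dS S (r^n) mid = s₀ := by
    rw [dS, ← wl_inv hS]
    have : ((r^n)⁻¹ * mid)⁻¹ = mid⁻¹ * r^n := by group
    rw [this]
    omega
  have hdm1 : dS S mid 1 = H := by
    rw [dS, ← wl_inv hS]
    simp [hmid1]
  have hdb1 : dS S (r^n) 1 = W := by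
    rw [dS, ← wl_inv hS]
    simp [hWdef]
  -- the key estimate
  have hkey : ∀ j ∈ J, (dS S mid (r^j * mid) : ℝ) ≤ 27*δ + 10 := by
    intro j hJm
    rw [hJdef, Finset.mem_filter, Finset.mem_Icc] at hJm
    obtain ⟨⟨hj1, hjn⟩, hjW⟩ := hJm
    set Lj := wordLen S (r^j) with hLjdef
    have hLjW : Lj ≤ W := hnmax j (by simp [Finset.mem_Icc]; omega)
    have hLjlow : (W:ℝ) - (3*δ+1) ≤ (Lj:ℝ) := by linarith
    have hLjn : (wordLen S (r^(j+n)) : ℝ) ≤ (W:ℝ) + (3*δ+1) := by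
      have := hum j n (by omega) (by omega)
      rw [← hLjdef, ← hWdef] at this
      have hmax : max (Lj:ℝ) (W:ℝ) = (W:ℝ) := max_eq_right (by exact_mod_cast hLjW)
      rw [hmax] at this
      exact this
    have hLnj : (wordLen S (r^(n-j)) : ℝ) ≤ (W:ℝ) := by
      have : wordLen S (r^(n-j)) ≤ W := hnmax (n-j) (by simp [Finset.mem_Icc]; omega)
      exact_mod_cast this
    -- real values of the parameters
    have hs0r : 2*(s₀:ℝ) = W ∨ 2*(s₀:ℝ) = (W:ℝ) + 1 := by
      rcases Nat.even_or_odd W with ⟨k, hk⟩ | ⟨k, hk⟩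
      · left
        have : 2*s₀ = W := by omega
        exact_mod_cast this
      · right
        have : 2*s₀ = W + 1 := by omega
        exact_mod_cast this
    have hs0low : (W:ℝ)/2 ≤ (s₀:ℝ) := by rcases hs0r with h | h <;> linarith
    have hs0up : (s₀:ℝ) ≤ (W:ℝ)/2 + 1 := by rcases hs0r with h | h <;> linarith
    have hs0Lj : s₀ ≤ Lj := by
      have : (s₀:ℝ) ≤ (Lj:ℝ) := by linarith
      exact_mod_cast this
    -- Step A
    obtain ⟨w, hw1, hw2⟩ := exists_prefix hS (r^j) s₀ hs0Lj
    set m₁ := r^n * w with hm1def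
    have hdbm1 : dS S (r^n) m₁ = s₀ := by rw [dS, hm1def, inv_mul_cancel_left, hw1]
    have hrjn : dS S (r^n) (r^(j+n)) = Lj := by
      rw [dS]
      have : (r^n)⁻¹ * r^(j+n) = r^j := by
        rw [show j + n = n + j from by omega, pow_add, inv_mul_cancel_left]
      rw [this]
    have hdm1jn : dS S m₁ (r^(j+n)) = Lj - s₀ := by
      rw [dS, hm1def]
      have : (r^n * w)⁻¹ * r^(j+n) = w⁻¹ * r^j := by
        rw [mul_inv_rev, mul_assoc]
        congr 1
        rw [show j + n = n + j from by omega, pow_add, inv_mul_cancel_left]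
      rw [this]
      omega
    have hγ1 : (W:ℝ)/2 - (3*δ+1) ≤ gpS S 1 (r^(j+n)) (r^n) := by
      have : gpS S 1 (r^(j+n)) (r^n) =
          ((dS S 1 (r^n) : ℝ) + dS S (r^(j+n)) (r^n) - dS S 1 (r^(j+n)))/2 := rfl
      rw [this, dS_comm hS 1 (r^n), hdb1, dS_comm hS (r^(j+n)) (r^n), hrjn, dS_one_left]
      linarith
    have hstepA : (dS S mid m₁ : ℝ) ≤ 2*(3*δ+1) + 4*δ + 2 := by
      have hfel := fellow hS hδ (a := r^n) (b := (1:Γ)) (c := r^(j+n)) (x := mid) (x' := m₁)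
        (s := s₀) (t := s₀) hds (by
          rw [hds, hdm1, hdb1]
          push_cast
          have : s₀ + H = W := by omega
          exact_mod_cast congrArg (Nat.cast : ℕ → ℝ) this) hdbm1 (by
          rw [hdbm1, hdm1jn, hrjn]
          push_cast [hs0Lj]
          ring)
      have hmin : (s₀:ℝ) - (3*δ+2) ≤ min (min (s₀:ℝ) (s₀:ℝ)) (gpS S 1 (r^(j+n)) (r^n)) := by
        rw [min_self]
        apply le_min
        · linarith
        · linarith
      linarith
    -- Step B
    set s₁ := Lj - s₀ with hs1def
    have hs1r : (s₁:ℝ) = (Lj:ℝ) - s₀ := by push_cast [hs1def, hs0Lj]; ring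
    have hs1W : s₁ ≤ W := by omega
    obtain ⟨w', hw'1, hw'2⟩ := exists_prefix hS ((r^n)⁻¹) s₁ (by rw [wl_inv hS]; exact hs1W)
    set m₂ := r^(j+n) * w' with hm2def
    have hdbm2 : dS S (r^(j+n)) m₂ = s₁ := by rw [dS, hm2def, inv_mul_cancel_left, hw'1]
    have hjninv : (r^(j+n))⁻¹ * r^j = (r^n)⁻¹ := by
      rw [pow_add, mul_inv_rev, mul_assoc]
      simp
    have hdb2j : dS S (r^(j+n)) (r^j) = W := by
      rw [dS, hjninv, wl_inv hS, ← hWdef]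
    have hdm2j : dS S m₂ (r^j) = W - s₁ := by
      rw [dS, hm2def]
      have : (r^(j+n) * w')⁻¹ * r^j = w'⁻¹ * (r^n)⁻¹ := by
        rw [mul_inv_rev, mul_assoc, hjninv]
      rw [this]
      have := hw'2
      rw [wl_inv hS] at this
      omega
    have hdb2n : dS S (r^(j+n)) (r^n) = Lj := by rw [dS_comm hS]; exact hrjn
    have hdm1n : dS S m₁ (r^n) = s₀ := by rw [dS_comm hS]; exact hdbm1
    have hdnj : dS S (r^n) (r^j) = wordLen S (r^(n-j)) := by
      rw [dS, ← wl_inv hS]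
      have : ((r^n)⁻¹ * r^j)⁻¹ = r^(n-j) := by
        have e : r^j * r^(n-j) = r^n := by rw [← pow_add]; congr 1; omega
        rw [mul_inv_rev, inv_inv, ← e, inv_mul_cancel_left]
      rw [this]
    have hγ2 : (W:ℝ)/2 - (3*δ+1) ≤ gpS S (r^n) (r^j) (r^(j+n)) := by
      have : gpS S (r^n) (r^j) (r^(j+n)) =
          ((dS S (r^n) (r^(j+n)) : ℝ) + dS S (r^j) (r^(j+n)) - dS S (r^n) (r^j))/2 := rfl
      rw [this, hrjn, dS_comm hS (r^j) (r^(j+n)), hdb2j, hdnj]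
      linarith
    have hdb2m1 : dS S (r^(j+n)) m₁ = s₁ := by rw [dS_comm hS]; exact hdm1jn
    have hstepB : (dS S m₁ m₂ : ℝ) ≤ 2*(3*δ+1) + 4*δ + 2 := by
      have hfel := fellow hS hδ (a := r^(j+n)) (b := r^n) (c := r^j) (x := m₁) (x' := m₂)
        (s := s₁) (t := s₁) hdb2m1 (by
          rw [hdb2m1, hdm1n, hdb2n]
          push_cast [hs1def, hs0Lj]
          ring) hdbm2 (by
          rw [hdbm2, hdm2j, hdb2j]
          push_cast [hs1W]
          ring)
      have hs1up : (s₁:ℝ) ≤ (W:ℝ)/2 := by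
        rw [hs1r]
        have : (Lj:ℝ) ≤ W := by exact_mod_cast hLjW
        linarith
      have hmin : (s₁:ℝ) - (3*δ+2) ≤ min (min (s₁:ℝ) (s₁:ℝ)) (gpS S (r^n) (r^j) (r^(j+n))) := by
        rw [min_self]
        apply le_min
        · linarith
        · linarith
      linarith
    -- Step C
    have hdb2mid : dS S (r^(j+n)) (r^j * mid) = s₀ := by
      have e : r^(j+n) = r^j * r^n := pow_add r j n
      rw [e, dS_mul_left]
      exact hds
    have hdmidj : dS S (r^j * mid) (r^j) = H := by
      have : dS S (r^j * mid) (r^j * 1) = dS S mid 1 := dS_mul_left _ _ _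
      rw [mul_one] at this
      rw [this, hdm1]
    have hstepC : (dS S m₂ (r^j * mid) : ℝ) ≤ 7*δ + 2 := by
      have hfel := fellow hS hδ (a := r^(j+n)) (b := r^j) (c := r^j) (x := m₂) (x' := r^j * mid)
        (s := s₁) (t := s₀) hdbm2 (by
          rw [hdbm2, hdm2j, hdb2j]
          push_cast [hs1W]
          ring) hdb2mid (by
          rw [hdb2mid, hdmidj, hdb2j]
          push_cast
          have : s₀ + H = W := by omega
          exact_mod_cast congrArg (Nat.cast : ℕ → ℝ) this)
      have hγ3 : gpS S (r^j) (r^j) (r^(j+n)) = (W:ℝ) := by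
        rw [gpS_self hS, dS_comm hS, hdb2j]
      rw [hγ3] at hfel
      have hminW : min (min (s₁:ℝ) (s₀:ℝ)) (W:ℝ) = min (s₁:ℝ) (s₀:ℝ) := by
        apply min_eq_left
        have h1 : (s₀:ℝ) ≤ W := by
          have : s₀ ≤ W := by omega
          exact_mod_cast this
        have h2 : (s₁:ℝ) ≤ W := by exact_mod_cast hs1W
        rcases le_total (s₁:ℝ) (s₀:ℝ) with hc | hc
        · rw [min_eq_left hc]; exact h2
        · rw [min_eq_right hc]; exact h1
      rw [hminW] at hfel
      -- |s₁ - s₀| ≤ 3δ+2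
      have habs : (s₁:ℝ) + s₀ - 2 * min (s₁:ℝ) (s₀:ℝ) ≤ 3*δ + 2 := by
        have hd1 : (s₁:ℝ) - s₀ ≤ 0 := by
          rw [hs1r]
          have : (Lj:ℝ) ≤ W := by exact_mod_cast hLjW
          rcases hs0r with hp | hp <;> linarith
        have hd2 : -(3*δ+2) ≤ (s₁:ℝ) - s₀ := by
          rw [hs1r]
          rcases hs0r with hp | hp <;> linarith
        rcases le_total (s₁:ℝ) (s₀:ℝ) with hc | hc
        · rw [min_eq_left hc]; linarith
        · rw [min_eq_right hc]; linarith
      linarith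
    -- total
    have t1 : dS S mid (r^j * mid) ≤ dS S mid m₁ + dS S m₁ m₂ + dS S m₂ (r^j * mid) := by
      have a1 : dS S mid (r^j * mid) ≤ dS S mid m₂ + dS S m₂ (r^j * mid) := dS_triangle hS _ _ _
      have a2 : dS S mid m₂ ≤ dS S mid m₁ + dS S m₁ m₂ := dS_triangle hS _ _ _
      omega
    have t1' : (dS S mid (r^j * mid) : ℝ) ≤
        (dS S mid m₁ : ℝ) + (dS S m₁ m₂ : ℝ) + (dS S m₂ (r^j * mid) : ℝ) := by
      exact_mod_cast t1
    linarith [hstepA, hstepB, hstepC]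
  -- pigeonhole
  have hmaps : ∀ j ∈ J, mid⁻¹ * (r^j * mid) ∈ BF := by
    intro j hj
    rw [hBFdef, Set.Finite.mem_toFinset]
    have h1 := hkey j hj
    have h2 : (dS S mid (r^j * mid) : ℝ) ≤ (RB:ℝ) := le_trans h1 hRBreal
    have h3 : dS S mid (r^j * mid) ≤ RB := by exact_mod_cast h2
    exact h3
  obtain ⟨j, hj, j', hj', hne, heq⟩ :=
    Finset.exists_ne_map_eq_of_card_lt_of_maps_to (by omega : BF.card < J.card) hmaps
  apply hne
  have : r^j * mid = r^(j') * mid := mul_left_cancel heq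
  have : r^j = r^(j') := mul_right_cancel this
  exact hinj this


/-- A conjugate of minimal length. -/
lemma exists_min_conj (hS : IsHypGroup S δ) (x : Γ) :
    ∃ u : Γ, ∀ v : Γ, wordLen S (u * x * u⁻¹) ≤ wordLen S (v * x * v⁻¹) := by
  have hne : {k : ℕ | ∃ u : Γ, wordLen S (u * x * u⁻¹) = k}.Nonempty :=
    ⟨wordLen S (1 * x * 1⁻¹), 1, rfl⟩
  obtain ⟨u, hu⟩ := Nat.sInf_mem hne
  refine ⟨u, fun v => ?_⟩
  rw [hu]
  exact Nat.sInf_le ⟨v, rfl⟩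

set_option maxHeartbeats 1000000 in
/-- Some power of an infinite order element has all conjugates long. -/
lemma exists_straight_power (hS : IsHypGroup S δ) (hδ : 0 ≤ δ) {g : Γ}
    (hg : ¬ IsOfFinOrder g) :
    ∃ n₀ : ℕ, 1 ≤ n₀ ∧ ∀ u : Γ, (6*δ+4 : ℝ) ≤ (wordLen S (u * g^n₀ * u⁻¹) : ℝ) := by
  classical
  by_cases hflat : ∀ a b : ℕ, 1 ≤ a → 1 ≤ b →
      (wordLen S (g^(a+b)) : ℝ) ≤ max (wordLen S (g^a) : ℝ) (wordLen S (g^b) : ℝ) + (3*δ+1)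
  · exact (flat_impossible hS hδ hg hflat).elim
  push_neg at hflat
  obtain ⟨a, b, ha, hb, hgt⟩ := hflat
  set La := wordLen S (g^a) with hLadef
  set Lb := wordLen S (g^b) with hLbdef
  set Lab := wordLen S (g^(a+b)) with hLabdef
  set c : ℝ := ((La:ℝ) + Lb - Lab)/2 with hcdef
  have hc0 : 0 ≤ c := by
    have : Lab ≤ La + Lb := by
      rw [hLabdef, hLadef, hLbdef, pow_add]
      exact wl_mul_le hS _ _
    have : (Lab:ℝ) ≤ (La:ℝ) + Lb := by exact_mod_cast this
    rw [hcdef]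
    linarith
  have hsteps : 2*c + 3*δ + 1 ≤ (La:ℝ) ∧ 2*c + 3*δ + 1 ≤ (Lb:ℝ) := by
    constructor
    · have h1 : (Lab:ℝ) > max (La:ℝ) (Lb:ℝ) + (3*δ+1) := hgt
      have h2 : (Lb:ℝ) ≤ max (La:ℝ) (Lb:ℝ) := le_max_right _ _
      rw [hcdef]
      linarith
    · have h1 : (Lab:ℝ) > max (La:ℝ) (Lb:ℝ) + (3*δ+1) := hgt
      have h2 : (La:ℝ) ≤ max (La:ℝ) (Lb:ℝ) := le_max_left _ _
      rw [hcdef]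
      linarith
  -- distances along the periodic chain
  have hd1a : dS S (1:Γ) (g^a) = La := by rw [dS_one_left, hLadef]
  have hd1b : dS S (1:Γ) (g^b) = Lb := by rw [dS_one_left, hLbdef]
  have hd1ab : dS S (1:Γ) (g^(a+b)) = Lab := by rw [dS_one_left, hLabdef]
  have hdab_a : dS S (g^(a+b)) (g^a) = Lb := by
    rw [dS, ← wl_inv hS]
    have : ((g^(a+b))⁻¹ * g^a)⁻¹ = g^b := by
      rw [pow_add]
      group
    rw [this, hLbdef]
  have hdab_b : dS S (g^(a+b)) (g^b) = La := by
    rw [dS, ← wl_inv hS]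
    have : ((g^(a+b))⁻¹ * g^b)⁻¹ = g^a := by
      rw [pow_add]
      group
    rw [this, hLadef]
  -- the chain x m = g ^ ((m/2)*(a+b) + (m%2)*a)
  have main : ∀ N : ℕ,
      (∀ m, m + 2 ≤ N → gpS S (g ^ ((m/2)*(a+b) + (m%2)*a))
          (g ^ (((m+2)/2)*(a+b) + ((m+2)%2)*a))
          (g ^ (((m+1)/2)*(a+b) + ((m+1)%2)*a)) ≤ c)
      ∧ (∀ m, m + 1 ≤ N → 2*c + 3*δ + 1 ≤
          (dS S (g ^ ((m/2)*(a+b) + (m%2)*a)) (g ^ (((m+1)/2)*(a+b) + ((m+1)%2)*a)) : ℝ)) := by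
    intro N
    constructor
    · intro m hm
      obtain ⟨i, rfl | rfl⟩ := Nat.even_or_odd' m
      · -- base point at g^{i(a+b)+a}, neighbours g^{i(a+b)}, g^{(i+1)(a+b)}
        have e1 : (2*i)/2 = i := by omega
        have e2 : (2*i) % 2 = 0 := by omega
        have e3 : (2*i+2)/2 = i+1 := by omega
        have e4 : (2*i+2) % 2 = 0 := by omega
        have e5 : (2*i+1)/2 = i := by omega
        have e6 : (2*i+1) % 2 = 1 := by omega
        rw [e1, e2, e3, e4, e5, e6]
        have f1 : g ^ (i*(a+b) + 0*a) = g^(i*(a+b)) * 1 := by rw [mul_one]; congr 1; omega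
        have f2 : g ^ ((i+1)*(a+b) + 0*a) = g^(i*(a+b)) * g^(a+b) := by
          rw [← pow_add]; congr 1; ring
        have f3 : g ^ (i*(a+b) + 1*a) = g^(i*(a+b)) * g^a := by
          rw [← pow_add]; congr 1; ring
        rw [f1, f2, f3, gpS_mul_left]
        have : gpS S 1 (g^(a+b)) (g^a) =
            ((dS S 1 (g^a) : ℝ) + dS S (g^(a+b)) (g^a) - dS S 1 (g^(a+b)))/2 := rfl
        rw [this, hd1a, hdab_a, hd1ab, hcdef]
      · have e1 : (2*i+1)/2 = i := by omega
        have e2 : (2*i+1) % 2 = 1 := by omega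
        have e3 : (2*i+1+2)/2 = i+1 := by omega
        have e4 : (2*i+1+2) % 2 = 1 := by omega
        have e5 : (2*i+1+1)/2 = i+1 := by omega
        have e6 : (2*i+1+1) % 2 = 0 := by omega
        rw [e1, e2, e3, e4, e5, e6]
        have f1 : g ^ (i*(a+b) + 1*a) = g^(i*(a+b) + a) * 1 := by rw [mul_one]; congr 1; ring
        have f2 : g ^ ((i+1)*(a+b) + 1*a) = g^(i*(a+b) + a) * g^(a+b) := by
          rw [← pow_add]; congr 1; ring
        have f3 : g ^ ((i+1)*(a+b) + 0*a) = g^(i*(a+b) + a) * g^b := by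
          rw [← pow_add]; congr 1; ring
        rw [f1, f2, f3, gpS_mul_left]
        have : gpS S 1 (g^(a+b)) (g^b) =
            ((dS S 1 (g^b) : ℝ) + dS S (g^(a+b)) (g^b) - dS S 1 (g^(a+b)))/2 := rfl
        rw [this, hd1b, hdab_b, hd1ab, hcdef]
        linarith
    · intro m hm
      obtain ⟨i, rfl | rfl⟩ := Nat.even_or_odd' m
      · have e1 : (2*i)/2 = i := by omega
        have e2 : (2*i) % 2 = 0 := by omega
        have e5 : (2*i+1)/2 = i := by omega
        have e6 : (2*i+1) % 2 = 1 := by omega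
        rw [e1, e2, e5, e6]
        have f1 : g ^ (i*(a+b) + 0*a) = g^(i*(a+b)) * 1 := by rw [mul_one]; congr 1; omega
        have f3 : g ^ (i*(a+b) + 1*a) = g^(i*(a+b)) * g^a := by
          rw [← pow_add]; congr 1; ring
        rw [f1, f3, dS_mul_left, dS_one_left, ← hLadef]
        exact hsteps.1
      · have e1 : (2*i+1)/2 = i := by omega
        have e2 : (2*i+1) % 2 = 1 := by omega
        have e5 : (2*i+1+1)/2 = i+1 := by omega
        have e6 : (2*i+1+1) % 2 = 0 := by omega
        rw [e1, e2, e5, e6]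
        have f1 : g ^ (i*(a+b) + 1*a) = g^(i*(a+b)+a) * 1 := by rw [mul_one]; congr 1; ring
        have f3 : g ^ ((i+1)*(a+b) + 0*a) = g^(i*(a+b)+a) * g^b := by
          rw [← pow_add]; congr 1; ring
        rw [f1, f3, dS_mul_left, dS_one_left, ← hLbdef]
        exact hsteps.2
  -- growth of powers of g^(a+b)
  have hgrow : ∀ k : ℕ, (2*k : ℝ) ≤ (wordLen S (g^(k*(a+b))) : ℝ) := by
    intro k
    have h := chain_iii hS hδ hc0 (main (2*k)).1 (main (2*k)).2 (2*k) le_rfl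
    have e3 : ((0:ℕ)/2) = 0 := by omega
    have e4 : ((0:ℕ) % 2) = 0 := by omega
    have e5 : ((2*k)/2) = k := by omega
    have e6 : ((2*k) % 2) = 0 := by omega
    rw [e3, e4, e5, e6] at h
    have f1 : g ^ ((0:ℕ)*(a+b) + 0*a) = (1:Γ) := by norm_num
    have f2 : k*(a+b) + 0*a = k*(a+b) := by ring
    rw [f1, f2, dS_one_left] at h
    push_cast at h ⊢
    linarith
  -- all conjugates of g^(k*(a+b)) are long
  have hconj : ∀ k : ℕ, ∀ u : Γ, 2*k ≤ wordLen S (u * g^(k*(a+b)) * u⁻¹) := by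
    intro k u
    by_contra hcon
    push_neg at hcon
    set A := wordLen S (u * g^(k*(a+b)) * u⁻¹) with hAdef
    set m := 2 * wordLen S u + 1 with hmdef
    have hpow : (u * g^(k*(a+b)) * u⁻¹)^m = u * g^(k*(a+b)*m) * u⁻¹ := by
      rw [conj_pow, ← pow_mul]
    have h1 : wordLen S (u * g^(k*(a+b)*m) * u⁻¹) ≤ m * A := by
      rw [← hpow]
      exact wl_pow_le hS _ m
    have h2 : wordLen S (g^(k*(a+b)*m)) ≤
        wordLen S u⁻¹ + wordLen S (u * g^(k*(a+b)*m) * u⁻¹) + wordLen S u := by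
      have e : g^(k*(a+b)*m) = u⁻¹ * (u * g^(k*(a+b)*m) * u⁻¹) * u := by group
      calc wordLen S (g^(k*(a+b)*m)) = wordLen S (u⁻¹ * (u * g^(k*(a+b)*m) * u⁻¹) * u) := by rw [← e]
        _ ≤ wordLen S (u⁻¹ * (u * g^(k*(a+b)*m) * u⁻¹)) + wordLen S u := wl_mul_le hS _ _
        _ ≤ wordLen S u⁻¹ + wordLen S (u * g^(k*(a+b)*m) * u⁻¹) + wordLen S u := by
            have := wl_mul_le hS u⁻¹ (u * g^(k*(a+b)*m) * u⁻¹)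
            omega
    have h3 : 2*(k*m) ≤ wordLen S (g^((k*m)*(a+b))) := by
      have := hgrow (k*m)
      exact_mod_cast this
    rw [show (k*m)*(a+b) = k*(a+b)*m from by ring] at h3
    rw [wl_inv hS] at h2
    have hA : A + 1 ≤ 2*k := by omega
    have hthis : 2*(k*m) ≤ 2*wordLen S u + m*A := by omega
    have hmA : m*(A+1) ≤ m*(2*k) := Nat.mul_le_mul_left m hA
    have e1 : m*(2*k) = 2*(k*m) := by ring
    have e2 : m*(A+1) = m*A + m := by ring
    omega
  set k₀ : ℕ := ⌈6*δ⌉₊ + 4 with hk0def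
  refine ⟨k₀ * (a+b), ?_, fun u => ?_⟩
  · have h0 : 1*1 ≤ k₀*(a+b) := Nat.mul_le_mul (by omega) (by omega)
    simpa using h0
  have h1 := hconj k₀ u
  have h2 : (2*k₀ : ℝ) ≤ (wordLen S (u * g^(k₀*(a+b)) * u⁻¹) : ℝ) := by exact_mod_cast h1
  have h3 : 6*δ ≤ (⌈6*δ⌉₊:ℝ) := Nat.le_ceil _
  have h4 : (k₀:ℝ) = (⌈6*δ⌉₊:ℝ) + 4 := by rw [hk0def]; push_cast; ring
  linarith


set_option maxHeartbeats 1000000 in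
/-- Per-element version of the main theorem (arbitrary minimal element of infinite order). -/
lemma per_g (hS : IsHypGroup S δ) (hδ : 0 ≤ δ) {g : Γ} (hg : ¬ IsOfFinOrder g)
    (hmin : ∀ u : Γ, wordLen S g ≤ wordLen S (u * g * u⁻¹)) :
    ∃ C : ℝ, 0 ≤ C ∧ ∀ h ∈ Subgroup.centralizer ({g} : Set Γ),
      ∃ k : ℤ, (wordLen S (g ^ (-k) * h) : ℝ) ≤ (wordLen S g : ℝ) + C := by
  obtain ⟨n₀, hn₀1, hn₀⟩ := exists_straight_power hS hδ hg
  obtain ⟨u₀, hu₀⟩ := exists_min_conj hS (g^n₀)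
  set p := u₀ * g^n₀ * u₀⁻¹ with hpdef
  have hq : 6*δ+4 ≤ (wordLen S p : ℝ) := hn₀ u₀
  have hpmin : ∀ w : Γ, wordLen S p ≤ wordLen S (w * p * w⁻¹) := by
    intro w
    have e : w * p * w⁻¹ = (w*u₀) * g^n₀ * (w*u₀)⁻¹ := by rw [hpdef]; group
    rw [e]
    exact hu₀ (w*u₀)
  obtain ⟨hst, hgr⟩ := straight hS hδ hpmin hq
  refine ⟨(wordLen S p : ℝ) + 20*δ + 2 + 2*(wordLen S u₀ : ℝ), by positivity, ?_⟩
  intro h hcent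
  rw [Subgroup.mem_centralizer_iff] at hcent
  have hgh : g * h = h * g := hcent g (by simp)
  have hcgh : Commute g h := hgh
  have hpow : g^n₀ * h = h * g^n₀ := (hcgh.pow_left n₀).eq
  have hcommp : (u₀*h*u₀⁻¹) * p = p * (u₀*h*u₀⁻¹) := by
    rw [hpdef]
    calc (u₀*h*u₀⁻¹) * (u₀ * g^n₀ * u₀⁻¹) = u₀ * (h * g^n₀) * u₀⁻¹ := by group
      _ = u₀ * (g^n₀ * h) * u₀⁻¹ := by rw [hpow]
      _ = (u₀ * g^n₀ * u₀⁻¹) * (u₀*h*u₀⁻¹) := by group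
  obtain ⟨j, hj⟩ := main_core hS hδ hst hgr hcommp
  refine ⟨j * (n₀:ℤ), ?_⟩
  have e1 : g ^ (-(j * (n₀:ℤ))) = (g^n₀ : Γ) ^ (-j : ℤ) := by
    rw [← zpow_natCast g n₀, ← zpow_mul]
    congr 1
    ring
  have e2 : p ^ (-j : ℤ) = u₀ * (g^n₀) ^ (-j:ℤ) * u₀⁻¹ := by rw [hpdef, conj_zpow]
  have hid : g ^ (-(j * (n₀:ℤ))) * h = u₀⁻¹ * (p ^ (-j:ℤ) * (u₀*h*u₀⁻¹)) * u₀ := by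
    rw [e1, e2]
    group
  rw [hid]
  have hb1 : wordLen S (u₀⁻¹ * (p ^ (-j:ℤ) * (u₀*h*u₀⁻¹)) * u₀) ≤
      wordLen S u₀ + wordLen S (p ^ (-j:ℤ) * (u₀*h*u₀⁻¹)) + wordLen S u₀ := by
    have a1 := wl_mul_le hS (u₀⁻¹ * (p ^ (-j:ℤ) * (u₀*h*u₀⁻¹))) u₀
    have a2 := wl_mul_le hS u₀⁻¹ (p ^ (-j:ℤ) * (u₀*h*u₀⁻¹))
    rw [wl_inv hS] at a2
    calc wordLen S (u₀⁻¹ * (p ^ (-j:ℤ) * (u₀*h*u₀⁻¹)) * u₀)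
        ≤ wordLen S (u₀⁻¹ * (p ^ (-j:ℤ) * (u₀*h*u₀⁻¹))) + wordLen S u₀ := a1
      _ ≤ wordLen S u₀ + wordLen S (p ^ (-j:ℤ) * (u₀*h*u₀⁻¹)) + wordLen S u₀ := by omega
  have hb1' : (wordLen S (u₀⁻¹ * (p ^ (-j:ℤ) * (u₀*h*u₀⁻¹)) * u₀) : ℝ) ≤
      (wordLen S u₀ : ℝ) + (wordLen S (p ^ (-j:ℤ) * (u₀*h*u₀⁻¹)) : ℝ) + wordLen S u₀ := by
    exact_mod_cast hb1
  have hg0 : (0:ℝ) ≤ (wordLen S g : ℝ) := by positivity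
  linarith [hj]

end HypAux

open HypAux in
set_option maxHeartbeats 1000000 in
/-- in a δ-hyperbolic group there is a constant `C₁₄` (depending only on
`Γ, S, δ`) such that for every element `g` of infinite order of minimal word length in
its conjugacy class, every element of the centralizer `Z(g)` agrees with some power of
`g` up to an element of word length at most `ℓ_S(g) + C₁₄`; i.e. the central extension
`0 → g^ℤ → Z(g) → N(g) → 0` admits a section whose values have word length at most
`ℓ_S(g) + C₁₄`. -/
theorem centralizer_section_bounded {Γ : Type} [Group Γ] (S : Set Γ) (δ : ℝ)
    (hδ : 0 ≤ δ) (hS : IsHypGroup S δ) :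
    ∃ C₁₄ : ℝ, 0 ≤ C₁₄ ∧
      ∀ g : Γ, ¬ IsOfFinOrder g →
        (∀ u : Γ, wordLen S g ≤ wordLen S (u * g * u⁻¹)) →
        ∀ h ∈ Subgroup.centralizer ({g} : Set Γ),
          ∃ k : ℤ, (wordLen S (g ^ (-k) * h) : ℝ) ≤ (wordLen S g : ℝ) + C₁₄ := by
  classical
  set RBad : ℕ := ⌈6*δ⌉₊ + 4 with hRBaddef
  have hBadfin : {g : Γ | wordLen S g ≤ RBad}.Finite := ball_finite hS RBad
  have hchoice : ∀ g : Γ, ∃ C : ℝ, 0 ≤ C ∧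
      ((¬IsOfFinOrder g ∧ ∀ u : Γ, wordLen S g ≤ wordLen S (u*g*u⁻¹)) →
        ∀ h ∈ Subgroup.centralizer ({g}:Set Γ), ∃ k : ℤ,
          (wordLen S (g^(-k)*h) : ℝ) ≤ (wordLen S g : ℝ) + C) := by
    intro g
    by_cases hgood : ¬IsOfFinOrder g ∧ ∀ u : Γ, wordLen S g ≤ wordLen S (u*g*u⁻¹)
    · obtain ⟨C, hC0, hC⟩ := per_g hS hδ hgood.1 hgood.2
      exact ⟨C, hC0, fun _ => hC⟩
    · exact ⟨0, le_rfl, fun hgd => absurd hgd hgood⟩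
  choose f hf0 hfP using hchoice
  set FB := insert (0:ℝ) (hBadfin.toFinset.image f) with hFBdef
  have hFBne : FB.Nonempty := ⟨0, Finset.mem_insert_self _ _⟩
  set Cbad := FB.max' hFBne with hCbaddef
  have hCbad0 : 0 ≤ Cbad := FB.le_max' 0 (Finset.mem_insert_self _ _)
  refine ⟨max (20*δ + 2) Cbad, le_trans hCbad0 (le_max_right _ _), ?_⟩
  intro g hginf hgmin h hcent
  rcases le_or_gt (6*δ+4) ((wordLen S g : ℝ)) with hbig | hsmall
  · obtain ⟨hst, hgr⟩ := straight hS hδ hgmin hbig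
    have hcent' := hcent
    rw [Subgroup.mem_centralizer_iff] at hcent'
    have hgh : g * h = h * g := hcent' g (by simp)
    obtain ⟨j, hj⟩ := main_core hS hδ hst hgr hgh.symm
    refine ⟨j, ?_⟩
    have hm : (20*δ+2 : ℝ) ≤ max (20*δ+2) Cbad := le_max_left _ _
    linarith [hj]
  · have hgBad : g ∈ hBadfin.toFinset := by
      rw [Set.Finite.mem_toFinset]
      have h6 : 6*δ ≤ (⌈6*δ⌉₊:ℝ) := Nat.le_ceil _
      have hle : (wordLen S g : ℝ) ≤ (RBad:ℝ) := by rw [hRBaddef]; push_cast; linarith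
      exact_mod_cast hle
    obtain ⟨k, hk⟩ := hfP g ⟨hginf, hgmin⟩ h hcent
    refine ⟨k, ?_⟩
    have hfC : f g ≤ Cbad :=
      FB.le_max' (f g) (Finset.mem_insert_of_mem (Finset.mem_image_of_mem f hgBad))
    have hm : Cbad ≤ max (20*δ+2) Cbad := le_max_right _ _
    linarith
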